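/- If D is a separative ultrafilter on κ, n < ω, and ᾱ^ℓ ∈ κ^κ for ℓ < n satisfy ᾱ^{ℓ₀}/D ≠ ᾱ^{ℓ₁}/D for ℓ₀ < ℓ₁ < n, then there is A ∈ D such that the sets {α^ℓ_i : i ∈ A} for ℓ < n are pairwise disjoint. -/

import Mathlib

open Cardinal

universe u

/-- An ultrafilter `D` on `κ` is separative if any two functions `κ → κ`
    which differ everywhere have disjoint images on some set in `D`. -/
def Separative {κ : Type u} (D : Ultrafilter κ) : Prop :=
  ∀ a b : κ → κ, (∀ i, a i ≠ b i) → ∃ A ∈ D, (a '' A) ∩ (b '' A) = ∅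

/-- Proposition 6.7: if `D` is separative and `ᾱ^ℓ` (ℓ < n) are pairwise
    distinct mod `D`, then on some `A ∈ D` the images `{α^ℓ_i : i ∈ A}` are
    pairwise disjoint. -/
theorem stmt_11 {κ : Type u} (D : Ultrafilter κ) (hD : Separative D)
    (n : ℕ) (a : Fin n → κ → κ)
    (ha : ∀ ℓ₀ ℓ₁ : Fin n, ℓ₀ < ℓ₁ → {i | a ℓ₀ i = a ℓ₁ i} ∉ D) :
    ∃ A ∈ D, ∀ ℓ₀ ℓ₁ : Fin n, ℓ₀ ≠ ℓ₁ → (a ℓ₀ '' A) ∩ (a ℓ₁ '' A) = ∅ := by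
  rcases subsingleton_or_nontrivial κ with hs | hnt
  · by_cases hn : 2 ≤ n
    · exfalso
      have h01 : (⟨0, by omega⟩ : Fin n) < ⟨1, by omega⟩ := by
        simp [Fin.lt_def]
      apply ha _ _ h01
      have : {i | a ⟨0, by omega⟩ i = a ⟨1, by omega⟩ i} = Set.univ := by
        ext i
        simp [Subsingleton.elim (a ⟨0, by omega⟩ i) (a ⟨1, by omega⟩ i)]
      rw [this]
      exact Filter.univ_mem
    · refine ⟨Set.univ, Filter.univ_mem, ?_⟩
      intro ℓ₀ ℓ₁ hne
      exact absurd (Fin.ext (by omega)) hne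
  · have key : ∀ ℓ₀ ℓ₁ : Fin n, ∃ A ∈ D,
        ℓ₀ < ℓ₁ → (a ℓ₀ '' A) ∩ (a ℓ₁ '' A) = ∅ := by
      intro ℓ₀ ℓ₁
      by_cases h : ℓ₀ < ℓ₁
      · have hC : {i | a ℓ₀ i = a ℓ₁ i}ᶜ ∈ D :=
          Ultrafilter.compl_mem_iff_notMem.2 (ha _ _ h)
        classical
        choose f hf using fun i => exists_ne (a ℓ₀ i)
        set b : κ → κ := fun i => if a ℓ₀ i = a ℓ₁ i then f i else a ℓ₁ i with hb
        have hne : ∀ i, a ℓ₀ i ≠ b i := by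
          intro i
          by_cases h' : a ℓ₀ i = a ℓ₁ i
          · simp only [hb, h', if_true]
            exact fun he => hf i (h'.trans he).symm
          · simp only [hb, h', if_false]
            exact h'
        obtain ⟨A, hA, hdisj⟩ := hD (a ℓ₀) b hne
        refine ⟨A ∩ {i | a ℓ₀ i = a ℓ₁ i}ᶜ, Filter.inter_mem hA hC, fun _ => ?_⟩
        apply Set.eq_empty_of_subset_empty
        rw [← hdisj]
        apply Set.inter_subset_inter
        · exact Set.image_mono (f := _) Set.inter_subset_left
        · rintro x ⟨i, ⟨hiA, hiC⟩, rfl⟩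
          simp only [Set.mem_compl_iff, Set.mem_setOf_eq] at hiC
          exact ⟨i, hiA, by simp only [hb, if_neg hiC]⟩
      · exact ⟨Set.univ, Filter.univ_mem, fun h' => absurd h' h⟩
    choose A hA hdisj using key
    refine ⟨⋂ ℓ₀, ⋂ ℓ₁, A ℓ₀ ℓ₁, ?_, ?_⟩
    · exact Filter.iInter_mem.2 fun ℓ₀ => Filter.iInter_mem.2 fun ℓ₁ => hA ℓ₀ ℓ₁
    · have sub : ∀ ℓ₀ ℓ₁ : Fin n, (⋂ ℓ₀, ⋂ ℓ₁, A ℓ₀ ℓ₁) ⊆ A ℓ₀ ℓ₁ := fun ℓ₀ ℓ₁ =>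
        (Set.iInter_subset _ ℓ₀).trans (Set.iInter_subset _ ℓ₁)
      intro ℓ₀ ℓ₁ hne
      rcases lt_or_gt_of_ne hne with h | h
      · apply Set.eq_empty_of_subset_empty
        rw [← hdisj ℓ₀ ℓ₁ h]
        exact Set.inter_subset_inter (Set.image_mono (f := _) (sub ℓ₀ ℓ₁))
          (Set.image_mono (f := _) (sub ℓ₀ ℓ₁))
      · apply Set.eq_empty_of_subset_empty
        rw [← hdisj ℓ₁ ℓ₀ h, Set.inter_comm]
        exact Set.inter_subset_inter (Set.image_mono (f := _) (sub ℓ₁ ℓ₀))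
          (Set.image_mono (f := _) (sub ℓ₁ ℓ₀))
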